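/- Let Γ act by automorphisms on the Γ-algebra B, A be a Γ-graded algebra, F_A a free Γ-graded A-module with homogeneous basis {v_α}, and F_B a free B-module with basis {w_β}. Then F_A ⋉_Γ F_B is a free Γ-graded (A ⋉_Γ B)-module with homogeneous basis {v_α ⊗ w_β}. -/

import Mathlib

open scoped TensorProduct

/-- If `Γ` acts on `B` by automorphisms, `F_A` is a free `Γ`-graded `A`-module with
homogeneous basis `{v_α}` and `F_B` is a free `B`-module with basis `{w_β}`, then
`F_A ⋉_Γ F_B` is a free `Γ`-graded `(A ⋉_Γ B)`-module with homogeneous basis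
`{v_α ⊗ w_β}`. -/
theorem stmt9 {K : Type*} [Field K] {Γ : Type*} [AddMonoid Γ] [DecidableEq Γ]
    {A : Type*} [Ring A] [Algebra K A] (𝒜 : Γ → Submodule K A) [GradedAlgebra 𝒜]
    {B : Type*} [Ring B] [Algebra K B]
    -- `Γ` acts on `B` by algebra automorphisms
    (ρ : Γ → (B ≃ₐ[K] B))
    (hρ0 : ∀ b : B, ρ 0 b = b)
    (hρadd : ∀ γ₁ γ₂ : Γ, ∀ b : B, ρ (γ₁ + γ₂) b = ρ γ₂ (ρ γ₁ b))
    -- the skew product algebra `C = A ⋉_Γ B`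
    {C : Type*} [Ring C] [Algebra K C]
    (e : (A ⊗[K] B) ≃ₗ[K] C)
    (he1 : e ((1 : A) ⊗ₜ[K] (1 : B)) = 1)
    (hemul : ∀ (γ₂ : Γ) (a₁ a₂ : A), a₂ ∈ 𝒜 γ₂ → ∀ b₁ b₂ : B,
      e (a₁ ⊗ₜ[K] b₁) * e (a₂ ⊗ₜ[K] b₂) = e ((a₁ * a₂) ⊗ₜ[K] (ρ γ₂ b₁ * b₂)))
    -- `F_A` : a `Γ`-graded `A`-module with homogeneous basis `v`
    {FA : Type*} [AddCommGroup FA] [Module K FA] [Module A FA] [IsScalarTower K A FA]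
    (ℱ : Γ → Submodule K FA) (hInt : DirectSum.IsInternal ℱ)
    (hsmul : ∀ (γ₁ γ₂ : Γ) (a : A) (x : FA), a ∈ 𝒜 γ₁ → x ∈ ℱ γ₂ → a • x ∈ ℱ (γ₁ + γ₂))
    {ι : Type*} (v : Module.Basis ι A FA) (d : ι → Γ) (hv : ∀ α : ι, v α ∈ ℱ (d α))
    -- `F_B` : a free `B`-module with basis `w`
    {FB : Type*} [AddCommGroup FB] [Module K FB] [Module B FB] [IsScalarTower K B FB]
    {κ : Type*} (w : Module.Basis κ B FB)
    -- `P = F_A ⋉_Γ F_B` : the `C`-module structure on `F_A ⊗ F_B`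
    {P : Type*} [AddCommGroup P] [Module K P] [Module C P] [IsScalarTower K C P]
    (eP : (FA ⊗[K] FB) ≃ₗ[K] P)
    (hPsmul : ∀ (γ₂ : Γ) (x : FA), x ∈ ℱ γ₂ → ∀ (a : A) (b : B) (y : FB),
      e (a ⊗ₜ[K] b) • eP (x ⊗ₜ[K] y) = eP ((a • x) ⊗ₜ[K] ((ρ γ₂ b) • y))) :
    -- then `P` is free over `C` with homogeneous basis `{v_α ⊗ w_β}`
    ∃ bP : Module.Basis (ι × κ) C P,
      (∀ (α : ι) (β : κ), bP (α, β) = eP (v α ⊗ₜ[K] w β)) ∧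
      (∀ (α : ι) (β : κ), eP (v α ⊗ₜ[K] w β) ∈
        Submodule.span K {p : P | ∃ x ∈ ℱ (d α), ∃ y : FB, p = eP (x ⊗ₜ[K] y)}) := by
  classical
  -- the C-linear map from the free module
  set φ : ((ι × κ) →₀ C) →ₗ[C] P :=
    Finsupp.linearCombination C (fun p : ι × κ => eP (v p.1 ⊗ₜ[K] w p.2)) with hφ
  -- the key computation
  have key : ∀ (α : ι) (β : κ) (a : A) (b : B),
      φ (Finsupp.single (α, β) (e (a ⊗ₜ[K] b))) =
        eP ((a • v α) ⊗ₜ[K] ((ρ (d α) b) • w β)) := by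
    intro α β a b
    rw [hφ, Finsupp.linearCombination_single, hPsmul (d α) (v α) (hv α) a b (w β)]
  -- the K-linear inverse map
  let rA : FA →ₗ[K] (ι →₀ A) := (v.repr.restrictScalars K).toLinearMap
  let rB : FB →ₗ[K] (κ →₀ B) := (w.repr.restrictScalars K).toLinearMap
  let L3 : ((ι × κ) →₀ A ⊗[K] B) →ₗ[K] ((ι × κ) →₀ C) :=
    Finsupp.lsum K (fun p => (Finsupp.lsingle p).comp
      (e.toLinearMap.comp (TensorProduct.map LinearMap.id (ρ (d p.1)).symm.toLinearMap)))
  let S : P →ₗ[K] ((ι × κ) →₀ C) :=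
    L3 ∘ₗ (finsuppTensorFinsupp K K A B ι κ).toLinearMap ∘ₗ
      (TensorProduct.map rA rB) ∘ₗ eP.symm.toLinearMap
  have hS : ∀ (α : ι) (β : κ) (a : A) (b : B),
      S (eP ((a • v α) ⊗ₜ[K] (b • w β))) =
        Finsupp.single (α, β) (e (a ⊗ₜ[K] ((ρ (d α)).symm b))) := by
    intro α β a b
    have h1 : rA (a • v α) = Finsupp.single α a := by
      simp [rA, Finsupp.smul_single]
    have h2 : rB (b • w β) = Finsupp.single β b := by
      simp [rB, Finsupp.smul_single]
    simp only [S, LinearMap.comp_apply, LinearEquiv.coe_coe, LinearEquiv.symm_apply_apply,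
      TensorProduct.map_tmul, h1, h2, finsuppTensorFinsupp_single]
    simp [L3, Finsupp.lsum_single]
  -- left inverse
  have hleft : ∀ f : (ι × κ) →₀ C, S (φ f) = f := by
    have : (S ∘ₗ (φ.restrictScalars K)) = LinearMap.id := by
      apply Finsupp.lhom_ext
      intro p c
      obtain ⟨t, rfl⟩ := e.surjective c
      obtain ⟨α, β⟩ := p
      induction t using TensorProduct.induction_on with
      | zero => simp
      | tmul a b =>
          simp only [LinearMap.comp_apply, LinearMap.restrictScalars_apply, LinearMap.id_apply]
          rw [key α β a b, hS]
          simp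
      | add t1 t2 h1 h2 =>
          have : Finsupp.single (α, β) (e (t1 + t2)) =
              Finsupp.single (α, β) (e t1) + Finsupp.single (α, β) (e t2) := by
            rw [map_add, Finsupp.single_add]
          rw [this, map_add, map_add, h1, h2]
    intro f
    exact DFunLike.congr_fun this f
  -- surjectivity
  have hsurj : Function.Surjective φ := by
    intro p
    obtain ⟨z, rfl⟩ := eP.surjective p
    suffices h : eP z ∈ LinearMap.range (φ.restrictScalars K) by
      obtain ⟨f, hf⟩ := h; exact ⟨f, hf⟩
    induction z using TensorProduct.induction_on with
    | zero => simp
    | tmul x y =>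
        have hx : x = (v.repr x).sum fun α a => a • v α := by
          conv_lhs => rw [← v.linearCombination_repr x]
          rw [Finsupp.linearCombination_apply]
        have hy : y = (w.repr y).sum fun β b => b • w β := by
          conv_lhs => rw [← w.linearCombination_repr y]
          rw [Finsupp.linearCombination_apply]
        rw [hx, Finsupp.sum, TensorProduct.sum_tmul, map_sum]
        apply Submodule.sum_mem
        intro α _
        rw [hy, Finsupp.sum, TensorProduct.tmul_sum, map_sum]
        apply Submodule.sum_mem
        intro β _
        refine ⟨Finsupp.single (α, β) (e ((v.repr x α) ⊗ₜ[K] ((ρ (d α)).symm (w.repr y β)))), ?_⟩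
        rw [LinearMap.restrictScalars_apply, key]
        simp
    | add z1 z2 h1 h2 =>
        rw [map_add]
        exact Submodule.add_mem _ h1 h2
  have hbij : Function.Bijective φ :=
    ⟨Function.LeftInverse.injective hleft, hsurj⟩
  let eqv : ((ι × κ) →₀ C) ≃ₗ[C] P := LinearEquiv.ofBijective φ hbij
  refine ⟨Module.Basis.ofRepr eqv.symm, ?_, ?_⟩
  · intro α β
    have : (Module.Basis.ofRepr eqv.symm) (α, β) = eqv (Finsupp.single (α, β) 1) := by
      simp [Module.Basis.apply_eq_iff]
    rw [this]
    show φ (Finsupp.single (α, β) 1) = _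
    rw [hφ, Finsupp.linearCombination_single, one_smul]
  · intro α β
    exact Submodule.subset_span ⟨v α, hv α, w β, rfl⟩
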